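/- If v ∈ ℝⁿ satisfies v ≥ 0 (entrywise) with v ≠ 0, and w ∈ ℝⁿ satisfies w > 0 (entrywise), then there exists an invertible n×n matrix B with all nonnegative entries such that Bv = w. -/

import Mathlib

theorem stmt1 (n : ℕ) (v w : Fin n → ℝ)
    (hv : ∀ i, 0 ≤ v i) (hv0 : v ≠ 0) (hw : ∀ i, 0 < w i) :
    ∃ B : Matrix (Fin n) (Fin n) ℝ,
      (∀ i j, 0 ≤ B i j) ∧ IsUnit B ∧ B.mulVec v = w := by
  -- find k with v k > 0
  obtain ⟨k, hk⟩ : ∃ k, v k ≠ 0 := Function.ne_iff.mp hv0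
  have hvk : 0 < v k := lt_of_le_of_ne (hv k) (Ne.symm hk)
  have hne : (Finset.univ : Finset (Fin n)).Nonempty := ⟨k, Finset.mem_univ k⟩
  set ε : ℝ := Finset.univ.inf' hne (fun i => w i / (v i + 1)) with hεdef
  have hvpos : ∀ i, (0:ℝ) < v i + 1 := fun i => by linarith [hv i]
  have hε : 0 < ε := by
    rw [hεdef, Finset.lt_inf'_iff]
    intro i _
    exact div_pos (hw i) (hvpos i)
  have hεw : ∀ i, ε * v i ≤ w i := by
    intro i
    have h1 : ε ≤ w i / (v i + 1) := Finset.inf'_le _ (Finset.mem_univ i)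
    have h2 : ε * (v i + 1) ≤ w i := (le_div_iff₀ (hvpos i)).mp h1
    nlinarith [hε]
  set c : Fin n → ℝ := fun i => (w i - ε * v i) / v k with hcdef
  have hc : ∀ i, 0 ≤ c i := fun i => div_nonneg (by linarith [hεw i]) hvk.le
  have hεck : 0 < ε + c k := add_pos_of_pos_of_nonneg hε (hc k)
  set B : Matrix (Fin n) (Fin n) ℝ :=
    fun i j => ε * (if i = j then 1 else 0) + c i * (if j = k then 1 else 0) with hB
  set C : Matrix (Fin n) (Fin n) ℝ :=
    fun j l => (1/ε) * ((if j = l then 1 else 0) - c j * (if l = k then 1 else 0) / (ε + c k))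
    with hC
  refine ⟨B, ?_, ?_, ?_⟩
  · intro i j
    have : (0:ℝ) ≤ ε * (if i = j then 1 else 0) := by positivity
    have : (0:ℝ) ≤ c i * (if j = k then 1 else 0) := by
      have := hc i; positivity
    simp only [hB]
    positivity
  · have hBC : B * C = 1 := by
      ext i l
      have key : (B * C) i l = ε * C i l + c i * C k l := by
        rw [Matrix.mul_apply]
        simp only [hB]
        simp only [add_mul, mul_ite, ite_mul, zero_mul, mul_zero, one_mul, mul_one,
          Finset.sum_add_distrib, Finset.sum_ite_eq, Finset.sum_ite_eq',
          Finset.mem_univ, if_true]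
      rw [key]
      simp only [hC, Matrix.one_apply]
      by_cases hil : i = l <;> by_cases hlk : l = k
      · subst hil; subst hlk
        simp only [if_pos rfl]
        field_simp
        ring
      · subst hil
        have hkl : ¬ k = i := fun h => hlk h.symm
        simp only [if_pos rfl, if_neg hlk, if_neg hkl, if_true]
        field_simp
        ring
      · subst hlk
        simp only [if_pos rfl, if_neg hil]
        field_simp
        ring
      · have hkl : ¬ k = l := fun h => hlk h.symm
        simp only [if_neg hil, if_neg hlk, if_neg hkl]
        ring
    exact ⟨⟨B, C, hBC, mul_eq_one_comm.mp hBC⟩, rfl⟩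
  · funext i
    simp only [Matrix.mulVec, dotProduct, hB]
    simp only [add_mul, mul_ite, ite_mul, mul_one, mul_zero, one_mul, zero_mul,
      Finset.sum_add_distrib, Finset.sum_ite_eq, Finset.sum_ite_eq', Finset.mem_univ, if_true]
    simp only [hcdef]
    field_simp
    ring
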